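/- Let d ≥ 1, m = 2d, and r, t ∈ ℂ with t ≠ 0 satisfy the unitarity constraints |r|² + (m−1)|t|² = 1 and (m−2)|t|² + conj(r)·t + r·conj(t) = 0. Then the dispersion 𝒟(n) = K·Σ_{a∈(Fin m)^n} ‖e(a_1)+⋯+e(a_n)‖²·|Ξ(a)|² of the quantum walk with random phase shifts equals the dispersion of the memoryless classical random walk, i.e. 𝒟(n) = n for all n ≥ 1, if and only if |r| = |t|. -/

import Mathlib

noncomputable section

open scoped BigOperators ComplexConjugate RealInnerProductSpace

/-- `Ξ(a_1, …, a_n) = ∏_{j=1}^{n-1} (t + (r - t) δ_{a_j, a_{j+1}})` (empty product is 1). -/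
def Xi (m n : ℕ) (r t : ℂ) (a : Fin n → Fin m) : ℂ :=
  ∏ j : Fin n, if h : (j : ℕ) + 1 < n then
    (t + (r - t) * (if a j = a ⟨(j : ℕ) + 1, h⟩ then 1 else 0)) else 1

/-- The `2d` signed standard basis vectors of `ℝ^d`: `e(2k) = u_k`, `e(2k+1) = -u_k`. -/
def eR (d : ℕ) (a : Fin (2 * d)) : EuclideanSpace ℝ (Fin d) :=
  EuclideanSpace.single ⟨(a : ℕ) / 2, by have := a.2; omega⟩
    (if (a : ℕ) % 2 = 0 then 1 else -1)

/-- The normalization constant `K = |(r-t)/√m + √m t|²` with `m = 2d`. -/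
def K (d : ℕ) (r t : ℂ) : ℝ :=
  ‖(r - t) / (Real.sqrt (2 * d) : ℂ) + (Real.sqrt (2 * d) : ℂ) * t‖ ^ 2

/-- The dispersion `𝒟(n) = K Σ_a ‖e(a_1)+⋯+e(a_n)‖² |Ξ(a)|²` of the phase-averaged
quantum walk with random phase shifts. -/
def Dsp (d : ℕ) (r t : ℂ) (n : ℕ) : ℝ :=
  K d r t * ∑ a : Fin n → Fin (2 * d),
    ‖∑ j : Fin n, eR d (a j)‖ ^ 2 * ‖Xi (2 * d) n r t a‖ ^ 2

/-- The auxiliary sum `R(n) = Σ_a |Ξ(a)|² ⟨e(a_1)+⋯+e(a_n), e(a_n)⟩`. -/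
def Rsum (d : ℕ) (r t : ℂ) (n : ℕ) : ℝ :=
  if hn : 0 < n then
    ∑ a : Fin n → Fin (2 * d), ‖Xi (2 * d) n r t a‖ ^ 2 *
      ⟪(∑ j : Fin n, eR d (a j)), eR d (a ⟨n - 1, by omega⟩)⟫
  else 0

lemma Xi_eq (m n : ℕ) (r t : ℂ) (c : Fin (n+1) → Fin m) :
    Xi m (n+1) r t c = ∏ j : Fin n,
      (t + (r - t) * (if c j.castSucc = c j.succ then 1 else 0)) := by
  rw [Xi, Fin.prod_univ_castSucc, dif_neg (by simp)]
  rw [mul_one]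
  apply Finset.prod_congr rfl
  intro j _
  rw [dif_pos (by simp [Fin.is_lt])]
  rfl

lemma Xi_one (m : ℕ) (r t : ℂ) (a : Fin 1 → Fin m) : Xi m 1 r t a = 1 := by
  simp [Xi]

lemma Xi_snoc (m n : ℕ) (r t : ℂ) (a : Fin (n+1) → Fin m) (b : Fin m) :
    Xi m (n+2) r t (Fin.snoc a b) =
      Xi m (n+1) r t a * (t + (r - t) * (if a (Fin.last n) = b then 1 else 0)) := by
  rw [Xi_eq, Xi_eq, Fin.prod_univ_castSucc]
  congr 1
  · apply Finset.prod_congr rfl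
    intro j _
    rw [show (j.castSucc.castSucc : Fin (n+2)) = (j.castSucc).castSucc from rfl,
      Fin.snoc_castSucc, Fin.succ_castSucc, Fin.snoc_castSucc]
  · rw [Fin.succ_last, Fin.snoc_last, Fin.snoc_castSucc]

lemma normsq_factor (r t : ℂ) (P : Prop) [Decidable P] :
    ‖t + (r - t) * (if P then (1:ℂ) else 0)‖^2 = if P then ‖r‖^2 else ‖t‖^2 := by
  split_ifs <;> simp

def e2 (d : ℕ) : Fin d × Fin 2 ≃ Fin (2 * d) where
  toFun p := ⟨2 * p.1 + p.2, by have := p.1.2; have := p.2.2; omega⟩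
  invFun b := (⟨(b : ℕ) / 2, by have := b.2; omega⟩, ⟨(b : ℕ) % 2, by omega⟩)
  left_inv p := by
    ext
    · simp; omega
    · simp; omega
  right_inv b := by
    ext; simp; omega

lemma sum_eR (d : ℕ) : ∑ b : Fin (2 * d), eR d b = 0 := by
  rw [← (e2 d).sum_comp]
  rw [Fintype.sum_prod_type]
  apply Finset.sum_eq_zero
  intro k _
  rw [Fin.sum_univ_two]
  have hv0 : ((e2 d (k, 0)) : ℕ) = 2 * k := by simp [e2]
  have hv1 : ((e2 d (k, 1)) : ℕ) = 2 * k + 1 := by simp [e2]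
  have h0 : eR d (e2 d (k, 0)) = EuclideanSpace.single k (1:ℝ) := by
    rw [eR]
    have hi : (⟨((e2 d (k, 0)):ℕ)/2, by have := (e2 d (k,0)).2; omega⟩ : Fin d) = k :=
      Fin.ext (by simp only [hv0]; omega)
    rw [hi, if_pos (by omega)]
  have h1 : eR d (e2 d (k, 1)) = EuclideanSpace.single k (-1:ℝ) := by
    rw [eR]
    have hi : (⟨((e2 d (k, 1)):ℕ)/2, by have := (e2 d (k,1)).2; omega⟩ : Fin d) = k :=
      Fin.ext (by simp only [hv1]; omega)
    rw [hi, if_neg (by omega)]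
  rw [h0, h1]
  ext i
  simp [EuclideanSpace.single_apply]
  split_ifs <;> ring

lemma inner_eR_self (d : ℕ) (b : Fin (2 * d)) : ⟪eR d b, eR d b⟫ = (1:ℝ) := by
  rw [eR, EuclideanSpace.inner_single_left]
  simp [EuclideanSpace.single_apply]
  split_ifs <;> norm_num

lemma norm_eR (d : ℕ) (b : Fin (2 * d)) : ‖eR d b‖ = 1 := by
  rw [eR, EuclideanSpace.norm_single]
  split_ifs <;> norm_num

lemma sum_snoc {m n : ℕ} (F : (Fin (n + 1) → Fin m) → ℝ) :
    ∑ c : Fin (n + 1) → Fin m, F c =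
      ∑ a : Fin n → Fin m, ∑ b : Fin m, F (Fin.snoc a b) := by
  rw [← (Fin.snocEquiv (fun _ => Fin m)).sum_comp F, Fintype.sum_prod_type,
    Finset.sum_comm]
  rfl

lemma sum_w {d : ℕ} {r t : ℂ} (h1 : ‖r‖ ^ 2 + (((2 * d : ℕ) : ℝ) - 1) * ‖t‖ ^ 2 = 1)
    (x : Fin (2 * d)) :
    ∑ b : Fin (2 * d), (if x = b then ‖r‖ ^ 2 else ‖t‖ ^ 2) = 1 := by
  have : ∀ b : Fin (2 * d), (if x = b then ‖r‖ ^ 2 else ‖t‖ ^ 2)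
      = (if x = b then ‖r‖ ^ 2 - ‖t‖ ^ 2 else 0) + ‖t‖ ^ 2 := by
    intro b; split_ifs <;> ring
  simp only [this]
  rw [Finset.sum_add_distrib, Finset.sum_ite_eq, if_pos (Finset.mem_univ x),
    Finset.sum_const, Finset.card_univ, Fintype.card_fin, nsmul_eq_mul]
  linarith [h1]

lemma sum_w_inner {d : ℕ} (r t : ℂ) (v : EuclideanSpace ℝ (Fin d)) (x : Fin (2 * d)) :
    ∑ b : Fin (2 * d), (if x = b then ‖r‖ ^ 2 else ‖t‖ ^ 2) * ⟪v, eR d b⟫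
      = (‖r‖ ^ 2 - ‖t‖ ^ 2) * ⟪v, eR d x⟫ := by
  have : ∀ b : Fin (2 * d), (if x = b then ‖r‖ ^ 2 else ‖t‖ ^ 2) * ⟪v, eR d b⟫
      = (if x = b then (‖r‖ ^ 2 - ‖t‖ ^ 2) * ⟪v, eR d b⟫ else 0) + ‖t‖ ^ 2 * ⟪v, eR d b⟫ := by
    intro b; split_ifs <;> ring
  simp only [this]
  rw [Finset.sum_add_distrib, Finset.sum_ite_eq, if_pos (Finset.mem_univ x),
    ← Finset.mul_sum, ← inner_sum, sum_eR, inner_zero_right, mul_zero, add_zero]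

def Ssum (d : ℕ) (r t : ℂ) (n : ℕ) : ℝ :=
  ∑ a : Fin n → Fin (2 * d),
    ‖∑ j : Fin n, eR d (a j)‖ ^ 2 * ‖Xi (2 * d) n r t a‖ ^ 2

lemma Dsp_eq (d : ℕ) (r t : ℂ) (n : ℕ) : Dsp d r t n = K d r t * Ssum d r t n := rfl

lemma Rsum_succ_def (d : ℕ) (r t : ℂ) (n : ℕ) :
    Rsum d r t (n + 1) = ∑ a : Fin (n + 1) → Fin (2 * d),
      ‖Xi (2 * d) (n + 1) r t a‖ ^ 2 *
        ⟪(∑ j : Fin (n + 1), eR d (a j)), eR d (a (Fin.last n))⟫ := by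
  rw [Rsum, dif_pos (Nat.succ_pos n)]
  rfl

lemma card_fun1 (d : ℕ) : (Fintype.card (Fin 1 → Fin (2 * d)) : ℝ) = (2 * d : ℝ) := by
  simp

lemma Xi_sq_snoc (d : ℕ) (n : ℕ) (r t : ℂ) (a : Fin (n + 1) → Fin (2 * d)) (b : Fin (2 * d)) :
    ‖Xi (2 * d) (n + 2) r t (Fin.snoc a b)‖ ^ 2 =
      ‖Xi (2 * d) (n + 1) r t a‖ ^ 2 * (if a (Fin.last n) = b then ‖r‖ ^ 2 else ‖t‖ ^ 2) := by
  rw [Xi_snoc, norm_mul, mul_pow, normsq_factor]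

lemma vsum_snoc (d n : ℕ) (a : Fin (n + 1) → Fin (2 * d)) (b : Fin (2 * d)) :
    ∑ j : Fin (n + 2), eR d ((Fin.snoc a b : Fin (n+2) → Fin (2*d)) j) =
      (∑ j : Fin (n + 1), eR d (a j)) + eR d b := by
  rw [Fin.sum_univ_castSucc, Fin.snoc_last]
  congr 1
  apply Finset.sum_congr rfl
  intro j _
  rw [Fin.snoc_castSucc]

lemma mass (d : ℕ) {r t : ℂ} (h1 : ‖r‖ ^ 2 + (((2 * d : ℕ) : ℝ) - 1) * ‖t‖ ^ 2 = 1) :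
    ∀ n : ℕ, ∑ a : Fin (n + 1) → Fin (2 * d), ‖Xi (2 * d) (n + 1) r t a‖ ^ 2 = (2 * d : ℝ) := by
  intro n
  induction n with
  | zero =>
    simp only [show ∀ a : Fin (0+1) → Fin (2*d), Xi (2*d) (0+1) r t a = 1 from
      fun a => Xi_one _ r t a, norm_one, one_pow]
    rw [Finset.sum_const, Finset.card_univ, nsmul_eq_mul, mul_one, card_fun1]
  | succ n ih =>
    rw [sum_snoc]
    have : ∀ a : Fin (n + 1) → Fin (2 * d),
        ∑ b : Fin (2 * d), ‖Xi (2 * d) (n + 2) r t (Fin.snoc a b)‖ ^ 2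
          = ‖Xi (2 * d) (n + 1) r t a‖ ^ 2 := by
      intro a
      simp only [Xi_sq_snoc]
      rw [← Finset.mul_sum, sum_w h1, mul_one]
    simp only [this]
    exact ih

lemma Rsum_one (d : ℕ) (r t : ℂ) : Rsum d r t 1 = (2 * d : ℝ) := by
  rw [Rsum_succ_def]
  have : ∀ a : Fin 1 → Fin (2 * d),
      ‖Xi (2 * d) 1 r t a‖ ^ 2 * ⟪(∑ j : Fin 1, eR d (a j)), eR d (a (Fin.last 0))⟫ = 1 := by
    intro a
    rw [Xi_one, Fin.sum_univ_one]
    have : a 0 = a (Fin.last 0) := rfl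
    rw [this, inner_eR_self]
    norm_num
  simp only [this]
  rw [Finset.sum_const, Finset.card_univ, nsmul_eq_mul, mul_one, card_fun1]

lemma Rsum_succ (d : ℕ) {r t : ℂ} (h1 : ‖r‖ ^ 2 + (((2 * d : ℕ) : ℝ) - 1) * ‖t‖ ^ 2 = 1)
    (n : ℕ) :
    Rsum d r t (n + 2) = (‖r‖ ^ 2 - ‖t‖ ^ 2) * Rsum d r t (n + 1) + (2 * d : ℝ) := by
  rw [Rsum_succ_def, Rsum_succ_def, sum_snoc]
  have key : ∀ a : Fin (n + 1) → Fin (2 * d),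
      ∑ b : Fin (2 * d), ‖Xi (2 * d) (n + 2) r t (Fin.snoc a b)‖ ^ 2 *
        ⟪(∑ j : Fin (n + 2), eR d ((Fin.snoc a b : Fin (n+2) → Fin (2*d)) j)), eR d ((Fin.snoc a b : Fin (n+2) → Fin (2*d)) (Fin.last (n + 1)))⟫
      = ‖Xi (2 * d) (n + 1) r t a‖ ^ 2 *
          ((‖r‖ ^ 2 - ‖t‖ ^ 2) *
            ⟪(∑ j : Fin (n + 1), eR d (a j)), eR d (a (Fin.last n))⟫ + 1) := by
    intro a
    have step : ∀ b : Fin (2 * d),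
        ‖Xi (2 * d) (n + 2) r t (Fin.snoc a b)‖ ^ 2 *
          ⟪(∑ j : Fin (n + 2), eR d ((Fin.snoc a b : Fin (n+2) → Fin (2*d)) j)), eR d ((Fin.snoc a b : Fin (n+2) → Fin (2*d)) (Fin.last (n + 1)))⟫
        = ‖Xi (2 * d) (n + 1) r t a‖ ^ 2 *
            ((if a (Fin.last n) = b then ‖r‖ ^ 2 else ‖t‖ ^ 2) *
              (⟪(∑ j : Fin (n + 1), eR d (a j)), eR d b⟫ + 1)) := by
      intro b
      rw [Xi_sq_snoc, vsum_snoc, Fin.snoc_last, inner_add_left, inner_eR_self]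
      ring
    simp only [step]
    rw [← Finset.mul_sum]
    congr 1
    have expand : ∀ b : Fin (2 * d),
        (if a (Fin.last n) = b then ‖r‖ ^ 2 else ‖t‖ ^ 2) *
            (⟪(∑ j : Fin (n + 1), eR d (a j)), eR d b⟫ + 1)
        = (if a (Fin.last n) = b then ‖r‖ ^ 2 else ‖t‖ ^ 2) *
            ⟪(∑ j : Fin (n + 1), eR d (a j)), eR d b⟫ +
          (if a (Fin.last n) = b then ‖r‖ ^ 2 else ‖t‖ ^ 2) := by
      intro b; ring
    simp only [expand]
    rw [Finset.sum_add_distrib, sum_w_inner, sum_w h1]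
  simp only [key]
  have distr : ∀ a : Fin (n + 1) → Fin (2 * d),
      ‖Xi (2 * d) (n + 1) r t a‖ ^ 2 *
        ((‖r‖ ^ 2 - ‖t‖ ^ 2) * ⟪(∑ j : Fin (n + 1), eR d (a j)), eR d (a (Fin.last n))⟫ + 1)
      = (‖r‖ ^ 2 - ‖t‖ ^ 2) * (‖Xi (2 * d) (n + 1) r t a‖ ^ 2 *
          ⟪(∑ j : Fin (n + 1), eR d (a j)), eR d (a (Fin.last n))⟫) +
        ‖Xi (2 * d) (n + 1) r t a‖ ^ 2 := by
    intro a; ring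
  simp only [distr]
  rw [Finset.sum_add_distrib, ← Finset.mul_sum, mass d h1]

lemma Ssum_one (d : ℕ) (r t : ℂ) : Ssum d r t 1 = (2 * d : ℝ) := by
  rw [Ssum]
  have : ∀ a : Fin 1 → Fin (2 * d),
      ‖∑ j : Fin 1, eR d (a j)‖ ^ 2 * ‖Xi (2 * d) 1 r t a‖ ^ 2 = 1 := by
    intro a
    rw [Xi_one, Fin.sum_univ_one, norm_eR]
    norm_num
  simp only [this]
  rw [Finset.sum_const, Finset.card_univ, nsmul_eq_mul, mul_one, card_fun1]

lemma Ssum_succ (d : ℕ) {r t : ℂ} (h1 : ‖r‖ ^ 2 + (((2 * d : ℕ) : ℝ) - 1) * ‖t‖ ^ 2 = 1)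
    (n : ℕ) :
    Ssum d r t (n + 2) = Ssum d r t (n + 1) +
      2 * (‖r‖ ^ 2 - ‖t‖ ^ 2) * Rsum d r t (n + 1) + (2 * d : ℝ) := by
  rw [Ssum, Ssum, Rsum_succ_def, sum_snoc]
  have key : ∀ a : Fin (n + 1) → Fin (2 * d),
      ∑ b : Fin (2 * d),
        ‖∑ j : Fin (n + 2), eR d ((Fin.snoc a b : Fin (n+2) → Fin (2*d)) j)‖ ^ 2 *
          ‖Xi (2 * d) (n + 2) r t (Fin.snoc a b)‖ ^ 2
      = ‖∑ j : Fin (n + 1), eR d (a j)‖ ^ 2 * ‖Xi (2 * d) (n + 1) r t a‖ ^ 2 +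
        2 * (‖r‖ ^ 2 - ‖t‖ ^ 2) * (‖Xi (2 * d) (n + 1) r t a‖ ^ 2 *
          ⟪(∑ j : Fin (n + 1), eR d (a j)), eR d (a (Fin.last n))⟫) +
        ‖Xi (2 * d) (n + 1) r t a‖ ^ 2 := by
    intro a
    have step : ∀ b : Fin (2 * d),
        ‖∑ j : Fin (n + 2), eR d ((Fin.snoc a b : Fin (n+2) → Fin (2*d)) j)‖ ^ 2 *
          ‖Xi (2 * d) (n + 2) r t (Fin.snoc a b)‖ ^ 2
        = ‖Xi (2 * d) (n + 1) r t a‖ ^ 2 *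
            ((if a (Fin.last n) = b then ‖r‖ ^ 2 else ‖t‖ ^ 2) *
              (‖∑ j : Fin (n + 1), eR d (a j)‖ ^ 2 +
                2 * ⟪(∑ j : Fin (n + 1), eR d (a j)), eR d b⟫ + 1)) := by
      intro b
      rw [Xi_sq_snoc, vsum_snoc, norm_add_sq_real, norm_eR]
      ring
    simp only [step]
    rw [← Finset.mul_sum]
    have expand : ∀ b : Fin (2 * d),
        (if a (Fin.last n) = b then ‖r‖ ^ 2 else ‖t‖ ^ 2) *
            (‖∑ j : Fin (n + 1), eR d (a j)‖ ^ 2 +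
              2 * ⟪(∑ j : Fin (n + 1), eR d (a j)), eR d b⟫ + 1)
        = ‖∑ j : Fin (n + 1), eR d (a j)‖ ^ 2 *
            (if a (Fin.last n) = b then ‖r‖ ^ 2 else ‖t‖ ^ 2) +
          2 * ((if a (Fin.last n) = b then ‖r‖ ^ 2 else ‖t‖ ^ 2) *
            ⟪(∑ j : Fin (n + 1), eR d (a j)), eR d b⟫) +
          (if a (Fin.last n) = b then ‖r‖ ^ 2 else ‖t‖ ^ 2) := by
      intro b; ring
    simp only [expand]
    rw [Finset.sum_add_distrib, Finset.sum_add_distrib, ← Finset.mul_sum, sum_w h1,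
      ← Finset.mul_sum, sum_w_inner]
    ring
  simp only [key]
  rw [Finset.sum_add_distrib, Finset.sum_add_distrib, ← Finset.mul_sum, mass d h1]

lemma K_eq (d : ℕ) (hd : 1 ≤ d) (r t : ℂ)
    (h1 : ‖r‖ ^ 2 + (((2 * d : ℕ) : ℝ) - 1) * ‖t‖ ^ 2 = 1)
    (h2 : (((2 * d : ℕ) : ℂ) - 2) * ((‖t‖ ^ 2 : ℝ) : ℂ) + conj r * t + r * conj t = 0) :
    K d r t = 1 / ((2 * d : ℕ) : ℝ) := by
  have hd' : (1:ℝ) ≤ (d:ℝ) := by exact_mod_cast hd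
  have hMpos : (0:ℝ) < ((2 * d : ℕ) : ℝ) := by
    have : 0 < 2 * d := by omega
    exact_mod_cast this
  set M : ℝ := ((2 * d : ℕ) : ℝ) with hM
  have hsnn : (0:ℝ) ≤ 2 * (d:ℝ) := by positivity
  have hs2 : (Real.sqrt (2 * d)) ^ 2 = M := by
    rw [Real.sq_sqrt hsnn, hM]; push_cast; ring
  have hspos : (0:ℝ) < Real.sqrt (2 * d) := Real.sqrt_pos.2 (by nlinarith)
  have hsne : ((Real.sqrt (2 * d) : ℝ) : ℂ) ≠ 0 := by
    exact_mod_cast ne_of_gt hspos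
  have e1 : (r - t) / (Real.sqrt (2 * d) : ℂ) + (Real.sqrt (2 * d) : ℂ) * t
      = (r + ((M - 1 : ℝ) : ℂ) * t) / (Real.sqrt (2 * d) : ℂ) := by
    rw [eq_div_iff hsne, add_mul, div_mul_cancel₀ _ hsne]
    rw [show ((Real.sqrt (2*d) : ℝ):ℂ) * t * ((Real.sqrt (2*d) : ℝ):ℂ)
        = (((Real.sqrt (2*d))^2 : ℝ) : ℂ) * t by push_cast; ring, hs2]
    push_cast
    ring
  rw [K, e1, norm_div, div_pow]
  have hns : ‖((Real.sqrt (2 * d) : ℝ) : ℂ)‖ ^ 2 = M := by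
    rw [Complex.norm_real, Real.norm_eq_abs, sq_abs, hs2]
  rw [hns]
  congr 1
  -- numerator = 1
  have h2re := congrArg Complex.re h2
  simp only [Complex.add_re, Complex.mul_re, Complex.sub_re, Complex.zero_re,
    Complex.conj_re, Complex.conj_im, Complex.ofReal_re, Complex.ofReal_im,
    Complex.natCast_re, Complex.natCast_im, Complex.re_ofNat, Complex.im_ofNat, Complex.sub_im] at h2re
  have ht2 : ‖t‖ ^ 2 = t.re ^ 2 + t.im ^ 2 := by
    rw [Complex.sq_norm, Complex.normSq_apply]; ring
  have hr2 : ‖r‖ ^ 2 = r.re ^ 2 + r.im ^ 2 := by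
    rw [Complex.sq_norm, Complex.normSq_apply]; ring
  have hnum : ‖r + ((M - 1 : ℝ) : ℂ) * t‖ ^ 2
      = (r.re + (M - 1) * t.re) ^ 2 + (r.im + (M - 1) * t.im) ^ 2 := by
    rw [Complex.sq_norm, Complex.normSq_apply]
    simp only [Complex.add_re, Complex.add_im, Complex.mul_re, Complex.mul_im,
      Complex.ofReal_re, Complex.ofReal_im]
    ring
  rw [hnum]
  rw [ht2, hr2] at h1
  rw [ht2] at h2re
  rw [hM] at *
  linear_combination h1 + ((((2 * d : ℕ) : ℝ)) - 1) * h2re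

/-- Theorem 2 of the paper: the dispersion of the quantum walk with random phase shifts
and a unitary generalized Grover coin `G_{r,t}` (with `t ≠ 0`) equals that of the
memoryless classical random walk, `𝒟(n) = n`, if and only if `|r| = |t|`. -/
theorem dispersion_classical_iff (d : ℕ) (hd : 1 ≤ d) (r t : ℂ) (ht : t ≠ 0)
    (h1 : ‖r‖ ^ 2 + (((2 * d : ℕ) : ℝ) - 1) * ‖t‖ ^ 2 = 1)
    (h2 : (((2 * d : ℕ) : ℂ) - 2) * ((‖t‖ ^ 2 : ℝ) : ℂ) + conj r * t + r * conj t = 0) :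
    (∀ n : ℕ, 1 ≤ n → Dsp d r t n = n) ↔ ‖r‖ = ‖t‖ := by
  have hK := K_eq d hd r t h1 h2
  have hMpos : (0:ℝ) < ((2 * d : ℕ) : ℝ) := by
    have : 0 < 2 * d := by omega
    exact_mod_cast this
  have hMne : ((2 * d : ℕ) : ℝ) ≠ 0 := ne_of_gt hMpos
  have hM' : ((2 * d : ℕ) : ℝ) = (2 * d : ℝ) := by push_cast; ring
  constructor
  · intro h
    have hD2 := h 2 (by norm_num)
    have e := Ssum_succ d h1 0
    rw [show (0:ℕ) + 2 = 2 from rfl, show (0:ℕ) + 1 = 1 from rfl, Ssum_one, Rsum_one] at e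
    rw [Dsp_eq, hK, e, hM'] at hD2
    have hdne : (2 * (d:ℝ)) ≠ 0 := by rw [← hM']; exact hMne
    field_simp at hD2
    push_cast at hD2
    have hl : ‖r‖ ^ 2 * (2 * (d:ℝ)) = ‖t‖ ^ 2 * (2 * (d:ℝ)) := by
      have hrt2 : ‖r‖ ^ 2 = ‖t‖ ^ 2 := by linarith [hD2]
      rw [hrt2]
    have hsq : ‖r‖ ^ 2 = ‖t‖ ^ 2 := mul_right_cancel₀ hdne hl
    have h0r := norm_nonneg r
    have h0t := norm_nonneg t
    nlinarith [hsq, h0r, h0t]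
  · intro hrt n hn
    have hlam : ‖r‖ ^ 2 - ‖t‖ ^ 2 = 0 := by rw [hrt]; ring
    have hS : ∀ k : ℕ, Ssum d r t (k + 1) = ((k:ℝ) + 1) * ((2 * d : ℕ) : ℝ) := by
      intro k
      induction k with
      | zero => rw [Ssum_one, hM']; norm_num
      | succ k ih =>
        rw [Ssum_succ d h1 k, ih, hlam, hM']
        push_cast
        ring
    obtain ⟨k, rfl⟩ : ∃ k, n = k + 1 := ⟨n - 1, by omega⟩
    rw [Dsp_eq, hK, hS k]
    field_simp
    norm_cast
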